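/- Let β > 0, let a be a nondecreasing weight on (0,∞) and let g, h be nonnegative measurable functions on (0,∞). Then ess sup_{x∈(0,∞)} [ (ess sup_{t∈(0,∞)} 𝒜(x,t)·g(t)) · (∫_0^∞ 𝒜(t,x)^β h(t) dt)^{1/β} ] ≈ ess sup_{x∈(0,∞)} [ g(x) (∫_x^∞ h(t) dt)^{1/β} ] + ess sup_{x∈(0,∞)} [ a(x)^{−1} g(x) (∫_0^x a(t)^β h(t) dt)^{1/β} ], with equivalence constants depending only on β. -/

import Mathlib

open MeasureTheory ENNReal Set

namespace GluingAux

lemma rpow_iSup_nat (u : ℕ → ℝ≥0∞) {r : ℝ} (hr : 0 < r) :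
    (⨆ n, u n) ^ r = ⨆ n, (u n) ^ r := by
  refine le_antisymm ?_ (iSup_le fun n => ENNReal.rpow_le_rpow (le_iSup u n) hr.le)
  have h1 : (⨆ n, u n) ≤ (⨆ n, (u n) ^ r) ^ (1/r) := by
    refine iSup_le fun n => ?_
    have h2 : u n = ((u n) ^ r) ^ (1/r) := by
      rw [← ENNReal.rpow_mul, mul_one_div, div_self hr.ne', ENNReal.rpow_one]
    rw [h2]
    exact ENNReal.rpow_le_rpow (le_iSup (fun n => (u n)^r) n) (by positivity)
  calc (⨆ n, u n) ^ r ≤ ((⨆ n, (u n) ^ r) ^ (1/r)) ^ r := ENNReal.rpow_le_rpow h1 hr.le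
    _ = ⨆ n, (u n) ^ r := by
        rw [← ENNReal.rpow_mul, one_div, inv_mul_cancel₀ hr.ne', ENNReal.rpow_one]

lemma add_rpow_le (u v : ℝ≥0∞) {r : ℝ} (hr : 0 ≤ r) :
    (u + v) ^ r ≤ 2 ^ r * (u ^ r + v ^ r) := by
  rcases le_total u v with hc | hc
  · calc (u+v)^r ≤ (2*v)^r := by
          refine ENNReal.rpow_le_rpow ?_ hr
          rw [two_mul]; exact add_le_add hc le_rfl
      _ = 2^r * v^r := ENNReal.mul_rpow_of_nonneg _ _ hr
      _ ≤ 2^r * (u^r + v^r) := by gcongr; exact le_add_self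
  · calc (u+v)^r ≤ (2*u)^r := by
          refine ENNReal.rpow_le_rpow ?_ hr
          rw [two_mul]; exact add_le_add le_rfl hc
      _ = 2^r * u^r := ENNReal.mul_rpow_of_nonneg _ _ hr
      _ ≤ 2^r * (u^r + v^r) := by gcongr; exact le_self_add

lemma half_le_div {u v : ℝ≥0∞} (hvu : v ≤ u) (hu0 : u ≠ 0) (hut : u ≠ ∞) :
    2⁻¹ ≤ u / (u + v) := by
  have h1 : u / (2 * u) ≤ u / (u + v) :=
    ENNReal.div_le_div_left (by rw [two_mul]; exact add_le_add le_rfl hvu) u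
  refine le_trans (le_of_eq ?_) h1
  rw [div_eq_mul_inv, ENNReal.mul_inv (Or.inl (by norm_num)) (Or.inl (by norm_num)),
    mul_comm (2:ℝ≥0∞)⁻¹ u⁻¹, ← mul_assoc, ENNReal.mul_inv_cancel hu0 hut, one_mul]

lemma le_div_general {u v : ℝ≥0∞} (hvu : v ≤ u) :
    2⁻¹ * (v * u⁻¹) ≤ v / (v + u) := by
  have h1 : v / (2 * u) ≤ v / (v + u) :=
    ENNReal.div_le_div_left (by rw [two_mul]; exact add_le_add hvu le_rfl) v
  refine le_trans (le_of_eq ?_) h1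
  rw [div_eq_mul_inv, ENNReal.mul_inv (Or.inl (by norm_num)) (Or.inl (by norm_num))]
  ring

lemma div_add_le_one {u v : ℝ≥0∞} : u / (u + v) ≤ 1 :=
  ENNReal.div_le_of_le_mul (by rw [one_mul]; exact le_self_add)

lemma div_add_le_div {u v : ℝ≥0∞} : u / (u + v) ≤ u / v :=
  ENNReal.div_le_div_left le_add_self u

lemma exists_good {α γ : ℝ} (h0 : 0 < α) (hαγ : α < γ) {p : ℝ → Prop}
    (hp : ∀ᵐ y ∂(volume.restrict (Ioi (0:ℝ))), p y) : ∃ y ∈ Ioo α γ, p y := by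
  by_contra hcon
  push_neg at hcon
  have hsub : Ioo α γ ⊆ {y | ¬ p y} := fun y hy => hcon y hy
  have h0' : volume.restrict (Ioi (0:ℝ)) (Ioo α γ) = 0 :=
    measure_mono_null hsub (ae_iff.mp hp)
  have hss : Ioo α γ ∩ Ioi (0:ℝ) = Ioo α γ := inter_eq_left.mpr fun y hy => h0.trans hy.1
  rw [Measure.restrict_apply measurableSet_Ioo, hss, Real.volume_Ioo] at h0'
  rw [ENNReal.ofReal_eq_zero] at h0'
  linarith

lemma ae_restrict_to_Ioi {s : Set ℝ} (hs : MeasurableSet s) (hsub : s ⊆ Ioi (0:ℝ)) {p : ℝ → Prop}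
    (h : ∀ᵐ x ∂(volume.restrict s), p x) :
    ∀ᵐ x ∂(volume.restrict (Ioi (0:ℝ))), x ∈ s → p x := by
  rw [show s = s ∩ Ioi (0:ℝ) from (inter_eq_left.mpr hsub).symm,
    ← Measure.restrict_restrict hs] at h
  exact (ae_restrict_iff' hs).mp h

lemma setLIntegral_mono_on' {s : Set ℝ} (hs : MeasurableSet s) {μ : Measure ℝ} {f₁ f₂ : ℝ → ℝ≥0∞}
    (h : ∀ t ∈ s, f₁ t ≤ f₂ t) : ∫⁻ t in s, f₁ t ∂μ ≤ ∫⁻ t in s, f₂ t ∂μ :=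
  lintegral_mono_ae ((ae_restrict_iff' hs).mpr (ae_of_all _ h))

local notation "μ₀" => volume.restrict (Ioi (0:ℝ))


noncomputable def Sf (a g : ℝ → ℝ≥0∞) (x : ℝ) : ℝ≥0∞ :=
  essSup (fun t => a x / (a x + a t) * g t) μ₀

noncomputable def Tf (β : ℝ) (a h : ℝ → ℝ≥0∞) (x : ℝ) : ℝ≥0∞ :=
  ∫⁻ t in Ioi (0:ℝ), (a t / (a t + a x)) ^ β * h t

noncomputable def Hf (h : ℝ → ℝ≥0∞) (x : ℝ) : ℝ≥0∞ := ∫⁻ t in Ioi x, h t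

noncomputable def Kf (β : ℝ) (a h : ℝ → ℝ≥0∞) (x : ℝ) : ℝ≥0∞ :=
  ∫⁻ t in Ioo (0:ℝ) x, a t ^ β * h t

noncomputable def Gf (g : ℝ → ℝ≥0∞) (x : ℝ) : ℝ≥0∞ :=
  essSup g (volume.restrict (Ioo (0:ℝ) x))

noncomputable def Gtf (a g : ℝ → ℝ≥0∞) (x : ℝ) : ℝ≥0∞ :=
  essSup (fun t => (a t)⁻¹ * g t) (volume.restrict (Ioi x))

lemma Hf_anti (h : ℝ → ℝ≥0∞) {x y : ℝ} (hxy : x ≤ y) : Hf h y ≤ Hf h x :=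
  lintegral_mono_set (Ioi_subset_Ioi hxy)

lemma Kf_mono (β : ℝ) (a h : ℝ → ℝ≥0∞) {x y : ℝ} (hxy : x ≤ y) : Kf β a h x ≤ Kf β a h y :=
  lintegral_mono_set (Ioo_subset_Ioo_right hxy)

lemma Gf_mono (g : ℝ → ℝ≥0∞) {x y : ℝ} (hxy : x ≤ y) : Gf g x ≤ Gf g y :=
  essSup_mono_measure' (Measure.restrict_mono (Ioo_subset_Ioo_right hxy) le_rfl)

lemma Gtf_anti (a g : ℝ → ℝ≥0∞) {x y : ℝ} (hxy : x ≤ y) : Gtf a g y ≤ Gtf a g x :=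
  essSup_mono_measure' (Measure.restrict_mono (Ioi_subset_Ioi hxy) le_rfl)

lemma Hf_eq_iSup {h : ℝ → ℝ≥0∞} (hh : Measurable h) (x : ℝ) :
    Hf h x = ⨆ n : ℕ, Hf h (x + 1/((n:ℝ)+1)) := by
  have happ : ∀ y : ℝ, Hf h y = volume.withDensity h (Ioi y) := fun y =>
    (withDensity_apply h measurableSet_Ioi).symm
  have hU : Ioi x = ⋃ n : ℕ, Ioi (x + 1/((n:ℝ)+1)) := by
    ext y
    simp only [mem_Ioi, mem_iUnion]
    constructor
    · intro hy
      obtain ⟨n, hn⟩ := exists_nat_one_div_lt (sub_pos.mpr hy)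
      exact ⟨n, by linarith⟩
    · rintro ⟨n, hn⟩
      have h1 : 0 < 1/((n:ℝ)+1) := by positivity
      linarith
  have hmono : Monotone (fun n : ℕ => Ioi (x + 1/((n:ℝ)+1))) := by
    intro n m hnm
    apply Ioi_subset_Ioi
    have h1 : (0:ℝ) < (n:ℝ)+1 := by positivity
    have h2 : ((n:ℝ)+1) ≤ ((m:ℝ)+1) := by
      have := Nat.cast_le (α := ℝ).mpr hnm
      linarith
    have h3 : 1/((m:ℝ)+1) ≤ 1/((n:ℝ)+1) := one_div_le_one_div_of_le h1 h2
    linarith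
  rw [happ, hU, Directed.measure_iUnion hmono.directed_le]
  simp only [happ]

lemma Kf_eq_iSup {β : ℝ} {a h : ℝ → ℝ≥0∞} (ha : Measurable a) (hh : Measurable h)
    {x : ℝ} (hx : 0 < x) :
    Kf β a h x = ⨆ n : ℕ, Kf β a h (x - x/((n:ℝ)+2)) := by
  have hd : Measurable (fun t => a t ^ β * h t) := (ha.pow measurable_const).mul hh
  have happ : ∀ y : ℝ, Kf β a h y = volume.withDensity (fun t => a t ^ β * h t) (Ioo 0 y) :=
    fun y => (withDensity_apply _ measurableSet_Ioo).symm
  have hU : Ioo (0:ℝ) x = ⋃ n : ℕ, Ioo (0:ℝ) (x - x/((n:ℝ)+2)) := by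
    ext y
    simp only [mem_Ioo, mem_iUnion]
    constructor
    · rintro ⟨hy0, hyx⟩
      obtain ⟨n, hn⟩ := exists_nat_one_div_lt (show 0 < (x-y)/x from div_pos (by linarith) hx)
      refine ⟨n, hy0, ?_⟩
      have h1 : x / ((n:ℝ)+2) ≤ x / ((n:ℝ)+1) :=
        div_le_div_of_nonneg_left hx.le (by positivity) (by linarith)
      have h2 : x / ((n:ℝ)+1) < x - y := by
        calc x / ((n:ℝ)+1) = x * (1/((n:ℝ)+1)) := by ring
          _ < x * ((x-y)/x) := by exact mul_lt_mul_of_pos_left hn hx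
          _ = x - y := by field_simp
      linarith
    · rintro ⟨n, hy0, hyn⟩
      have h1 : 0 ≤ x/((n:ℝ)+2) := by positivity
      exact ⟨hy0, by linarith⟩
  have hmono : Monotone (fun n : ℕ => Ioo (0:ℝ) (x - x/((n:ℝ)+2))) := by
    intro n m hnm
    apply Ioo_subset_Ioo_right
    have h2 : ((n:ℝ)+2) ≤ ((m:ℝ)+2) := by
      have := Nat.cast_le (α := ℝ).mpr hnm
      linarith
    have h3 : x/((m:ℝ)+2) ≤ x/((n:ℝ)+2) :=
      div_le_div_of_nonneg_left hx.le (by positivity) h2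
    linarith
  rw [happ, hU, Directed.measure_iUnion hmono.directed_le]
  simp only [happ]



lemma P1 {β : ℝ} (hβ : 0 < β) {g h : ℝ → ℝ≥0∞} (hh : Measurable h) :
    essSup (fun x => g x * Hf h x ^ (1/β)) μ₀ ≤ essSup (fun x => Gf g x * Hf h x ^ (1/β)) μ₀ := by
  set M1 := essSup (fun x => Gf g x * Hf h x ^ (1/β)) μ₀ with hM1
  refine essSup_le_of_ae_le _ ?_
  have haeG : ∀ᵐ x ∂μ₀, ∀ q : ℚ, x ∈ Ioo (0:ℝ) (q:ℝ) → g x ≤ Gf g q := by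
    rw [ae_all_iff]
    intro q
    exact ae_restrict_to_Ioi measurableSet_Ioo (fun y hy => hy.1) (ENNReal.ae_le_essSup g)
  filter_upwards [haeG, ae_restrict_mem measurableSet_Ioi] with x hx hx0
  have hx0' : (0:ℝ) < x := hx0
  have step : ∀ z, x < z → g x * Hf h z ^ (1/β) ≤ M1 := by
    intro z hz
    obtain ⟨q, hq1, hq2⟩ := exists_rat_btwn hz
    obtain ⟨y, hy, hyP⟩ := exists_good (hx0'.trans hq1) hq2
      (ENNReal.ae_le_essSup (fun x => Gf g x * Hf h x ^ (1/β)))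
    have h1 : g x ≤ Gf g y := le_trans (hx q ⟨hx0', hq1⟩) (Gf_mono g hy.1.le)
    have h2 : Hf h z ≤ Hf h y := Hf_anti h hy.2.le
    calc g x * Hf h z ^ (1/β) ≤ Gf g y * Hf h y ^ (1/β) :=
          mul_le_mul' h1 (ENNReal.rpow_le_rpow h2 (by positivity))
      _ ≤ M1 := hyP
  rw [Hf_eq_iSup hh x, rpow_iSup_nat _ (show (0:ℝ) < 1/β by positivity), ENNReal.mul_iSup]
  exact iSup_le fun n => step _ (lt_add_of_pos_right x (by positivity))

lemma P2 {β : ℝ} (hβ : 0 < β) {a g h : ℝ → ℝ≥0∞} (ha : Measurable a) (hh : Measurable h) :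
    essSup (fun x => (a x)⁻¹ * g x * Kf β a h x ^ (1/β)) μ₀ ≤
      essSup (fun x => Gtf a g x * Kf β a h x ^ (1/β)) μ₀ := by
  set M2 := essSup (fun x => Gtf a g x * Kf β a h x ^ (1/β)) μ₀ with hM2
  refine essSup_le_of_ae_le _ ?_
  have haeGt : ∀ᵐ x ∂μ₀, ∀ q : ℚ, 0 < (q:ℝ) → x ∈ Ioi (q:ℝ) → (a x)⁻¹ * g x ≤ Gtf a g q := by
    rw [ae_all_iff]
    intro q
    rcases le_or_gt (q:ℝ) 0 with hq | hq
    · exact ae_of_all _ (fun x h1 => absurd h1 (not_lt.mpr hq))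
    · have h2 := ae_restrict_to_Ioi measurableSet_Ioi (Ioi_subset_Ioi hq.le)
        (ENNReal.ae_le_essSup (fun t => (a t)⁻¹ * g t))
      filter_upwards [h2] with x hx _ hxq using hx hxq
  filter_upwards [haeGt, ae_restrict_mem measurableSet_Ioi] with x hx hx0
  have hx0' : (0:ℝ) < x := hx0
  have step : ∀ z, z ∈ Ioo (0:ℝ) x → (a x)⁻¹ * g x * Kf β a h z ^ (1/β) ≤ M2 := by
    intro z hz
    obtain ⟨q, hq1, hq2⟩ := exists_rat_btwn hz.2
    obtain ⟨y, hy, hyP⟩ := exists_good hz.1 hq1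
      (ENNReal.ae_le_essSup (fun x => Gtf a g x * Kf β a h x ^ (1/β)))
    have h1 : (a x)⁻¹ * g x ≤ Gtf a g y :=
      le_trans (hx q (hz.1.trans hq1) hq2) (Gtf_anti a g hy.2.le)
    have h2 : Kf β a h z ≤ Kf β a h y := Kf_mono β a h hy.1.le
    calc (a x)⁻¹ * g x * Kf β a h z ^ (1/β) ≤ Gtf a g y * Kf β a h y ^ (1/β) :=
          mul_le_mul' h1 (ENNReal.rpow_le_rpow h2 (by positivity))
      _ ≤ M2 := hyP
  rw [Kf_eq_iSup ha hh hx0', rpow_iSup_nat _ (show (0:ℝ) < 1/β by positivity), ENNReal.mul_iSup]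
  refine iSup_le fun n => step _ ⟨?_, ?_⟩
  · have h1 : x/((n:ℝ)+2) < x := by
      apply div_lt_self hx0'
      have := Nat.cast_nonneg (α := ℝ) n
      linarith
    linarith
  · have h1 : 0 < x/((n:ℝ)+2) := by positivity
    linarith


lemma two_inv_sq : (2:ℝ≥0∞)⁻¹ * 2⁻¹ = 4⁻¹ := by
  rw [← ENNReal.mul_inv (Or.inl (by norm_num)) (Or.inl (by norm_num))]
  norm_num

lemma L1 {β : ℝ} (hβ : 0 < β) {a g h : ℝ → ℝ≥0∞}
    (hmono : MonotoneOn a (Ioi 0)) (hae : ∀ᵐ x ∂μ₀, 0 < a x ∧ a x < ∞) :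
    ∀ᵐ x ∂μ₀, 4⁻¹ * (Gf g x * Hf h x ^ (1/β)) ≤ Sf a g x * Tf β a h x ^ (1/β) := by
  filter_upwards [hae, ae_restrict_mem measurableSet_Ioi] with x hax hx0
  obtain ⟨hax0, haxt⟩ := hax
  have hx0' : (0:ℝ) < x := hx0
  have hS : 2⁻¹ * Gf g x ≤ Sf a g x := by
    have e1 : essSup (fun t => 2⁻¹ * g t) (volume.restrict (Ioo (0:ℝ) x)) = 2⁻¹ * Gf g x :=
      ENNReal.essSup_const_mul
    rw [← e1]
    refine le_trans (essSup_mono_ae ?_)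
      (essSup_mono_measure' (Measure.restrict_mono (fun t ht => ht.1) le_rfl))
    refine (ae_restrict_iff' measurableSet_Ioo).mpr (ae_of_all _ fun t ht => ?_)
    have hat : a t ≤ a x := hmono ht.1 hx0 ht.2.le
    exact mul_le_mul' (half_le_div hat hax0.ne' haxt.ne) le_rfl
  have hT : (2⁻¹ : ℝ≥0∞)^β * Hf h x ≤ Tf β a h x := by
    have hsub : Ioi x ⊆ Ioi (0:ℝ) := Ioi_subset_Ioi hx0'.le
    have h2 : ∫⁻ t in Ioi x, (2⁻¹:ℝ≥0∞)^β * h t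
        ≤ ∫⁻ t in Ioi x, (a t / (a t + a x))^β * h t := by
      apply lintegral_mono_ae
      have hae' : ∀ᵐ t ∂(volume.restrict (Ioi x)), 0 < a t ∧ a t < ∞ :=
        ae_restrict_of_ae_restrict_of_subset hsub hae
      filter_upwards [hae', ae_restrict_mem measurableSet_Ioi] with t hat htx
      have h3 : a x ≤ a t := hmono hx0 (hsub htx) (le_of_lt htx)
      exact mul_le_mul'
        (ENNReal.rpow_le_rpow (half_le_div h3 hat.1.ne' hat.2.ne) hβ.le) le_rfl
    calc (2⁻¹:ℝ≥0∞)^β * Hf h x = ∫⁻ t in Ioi x, (2⁻¹:ℝ≥0∞)^β * h t :=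
          (lintegral_const_mul' _ _ (ENNReal.rpow_ne_top_of_nonneg hβ.le (by norm_num))).symm
      _ ≤ ∫⁻ t in Ioi x, (a t/(a t + a x))^β * h t := h2
      _ ≤ Tf β a h x := lintegral_mono_set hsub
  have hT' : 2⁻¹ * Hf h x ^ (1/β) ≤ Tf β a h x ^ (1/β) := by
    calc 2⁻¹ * Hf h x ^ (1/β) = ((2⁻¹:ℝ≥0∞)^β * Hf h x) ^ (1/β) := by
          rw [ENNReal.mul_rpow_of_nonneg _ _ (by positivity : (0:ℝ) ≤ 1/β),
            ← ENNReal.rpow_mul, mul_one_div, div_self hβ.ne', ENNReal.rpow_one]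
      _ ≤ _ := ENNReal.rpow_le_rpow hT (by positivity)
  calc 4⁻¹ * (Gf g x * Hf h x ^ (1/β))
      = (2⁻¹ * Gf g x) * (2⁻¹ * Hf h x ^ (1/β)) := by rw [← two_inv_sq]; ring
    _ ≤ Sf a g x * Tf β a h x ^ (1/β) := mul_le_mul' hS hT'

lemma L2 {β : ℝ} (hβ : 0 < β) {a g h : ℝ → ℝ≥0∞}
    (hmono : MonotoneOn a (Ioi 0)) (hae : ∀ᵐ x ∂μ₀, 0 < a x ∧ a x < ∞) :
    ∀ᵐ x ∂μ₀, 4⁻¹ * (Gtf a g x * Kf β a h x ^ (1/β)) ≤ Sf a g x * Tf β a h x ^ (1/β) := by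
  filter_upwards [hae, ae_restrict_mem measurableSet_Ioi] with x hax hx0
  obtain ⟨hax0, haxt⟩ := hax
  have hx0' : (0:ℝ) < x := hx0
  have hS : (2⁻¹ * a x) * Gtf a g x ≤ Sf a g x := by
    have e1 : essSup (fun t => (2⁻¹ * a x) * ((a t)⁻¹ * g t)) (volume.restrict (Ioi x))
        = (2⁻¹ * a x) * Gtf a g x := ENNReal.essSup_const_mul
    rw [← e1]
    refine le_trans (essSup_mono_ae ?_)
      (essSup_mono_measure' (Measure.restrict_mono (Ioi_subset_Ioi hx0'.le) le_rfl))
    refine (ae_restrict_iff' measurableSet_Ioi).mpr (ae_of_all _ fun t ht => ?_)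
    have hat : a x ≤ a t := hmono hx0 (lt_trans hx0' ht) (le_of_lt ht)
    calc (2⁻¹ * a x) * ((a t)⁻¹ * g t) = (2⁻¹ * (a x * (a t)⁻¹)) * g t := by ring
      _ ≤ a x / (a x + a t) * g t := mul_le_mul' (le_div_general hat) le_rfl
  have hT : ((2 * a x)^β)⁻¹ * Kf β a h x ≤ Tf β a h x := by
    have hne : ((2 * a x)^β)⁻¹ ≠ ∞ := by
      rw [ENNReal.inv_ne_top]
      rw [ne_eq, ENNReal.rpow_eq_zero_iff_of_pos hβ]
      exact mul_ne_zero (by norm_num) hax0.ne'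
    have h2 : ∫⁻ t in Ioo (0:ℝ) x, ((2 * a x)^β)⁻¹ * (a t ^ β * h t)
        ≤ ∫⁻ t in Ioo (0:ℝ) x, (a t / (a t + a x))^β * h t := by
      refine setLIntegral_mono_on' measurableSet_Ioo (fun t ht => ?_)
      have hat : a t ≤ a x := hmono ht.1 hx0 ht.2.le
      have h3 : ((2 * a x)^β)⁻¹ * a t ^ β = (a t / (2 * a x))^β := by
        rw [ENNReal.div_rpow_of_nonneg _ _ hβ.le, div_eq_mul_inv, mul_comm]
      calc ((2 * a x)^β)⁻¹ * (a t ^ β * h t) = (((2 * a x)^β)⁻¹ * a t ^ β) * h t := by ring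
        _ = (a t / (2 * a x))^β * h t := by rw [h3]
        _ ≤ (a t / (a t + a x))^β * h t := by
            refine mul_le_mul' (ENNReal.rpow_le_rpow ?_ hβ.le) le_rfl
            exact ENNReal.div_le_div_left (by rw [two_mul]; exact add_le_add hat le_rfl) _
    calc ((2 * a x)^β)⁻¹ * Kf β a h x
        = ∫⁻ t in Ioo (0:ℝ) x, ((2 * a x)^β)⁻¹ * (a t ^ β * h t) :=
          (lintegral_const_mul' _ _ hne).symm
      _ ≤ ∫⁻ t in Ioo (0:ℝ) x, (a t / (a t + a x))^β * h t := h2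
      _ ≤ Tf β a h x := lintegral_mono_set (fun t ht => ht.1)
  have hT' : (2 * a x)⁻¹ * Kf β a h x ^ (1/β) ≤ Tf β a h x ^ (1/β) := by
    have e2 : (((2 * a x)^β)⁻¹ * Kf β a h x) ^ (1/β)
        = (2 * a x)⁻¹ * Kf β a h x ^ (1/β) := by
      rw [ENNReal.mul_rpow_of_nonneg _ _ (by positivity : (0:ℝ) ≤ 1/β)]
      congr 1
      rw [← ENNReal.rpow_neg, ← ENNReal.rpow_mul]
      rw [show -β * (1/β) = -1 by field_simp, ENNReal.rpow_neg_one]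
    rw [← e2]
    exact ENNReal.rpow_le_rpow hT (by positivity)
  have hcancel : a x * (a x)⁻¹ = 1 := ENNReal.mul_inv_cancel hax0.ne' haxt.ne
  have hT'' : (2⁻¹ * (a x)⁻¹) * Kf β a h x ^ (1/β) ≤ Tf β a h x ^ (1/β) := by
    rw [← ENNReal.mul_inv (Or.inl (by norm_num)) (Or.inl (by norm_num))]
    exact hT'
  calc 4⁻¹ * (Gtf a g x * Kf β a h x ^ (1/β))
      = ((2⁻¹*2⁻¹) * (a x * (a x)⁻¹)) * (Gtf a g x * Kf β a h x ^ (1/β)) := by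
        rw [hcancel, two_inv_sq]; ring
    _ = ((2⁻¹ * a x) * Gtf a g x) * ((2⁻¹ * (a x)⁻¹) * Kf β a h x ^ (1/β)) := by ring
    _ ≤ Sf a g x * Tf β a h x ^ (1/β) := mul_le_mul' hS hT''


lemma upper {β : ℝ} (hβ : 0 < β) {a g h : ℝ → ℝ≥0∞}
    (hmono : MonotoneOn a (Ioi 0)) (hae : ∀ᵐ x ∂μ₀, 0 < a x ∧ a x < ∞) :
    essSup (fun x => Sf a g x * Tf β a h x ^ (1/β)) μ₀ ≤
      (2 * (2:ℝ≥0∞)^(1/β) + 2 * (2:ℝ≥0∞)^(1/β) * (2:ℝ≥0∞)^(1/β)) *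
        (essSup (fun x => g x * Hf h x ^ (1/β)) μ₀
          + essSup (fun x => (a x)⁻¹ * g x * Kf β a h x ^ (1/β)) μ₀) := by
  set r := 1/β with hr_def
  have hr : (0:ℝ) < r := by positivity
  set D := (2:ℝ≥0∞)^r with hD_def
  set B1 := essSup (fun x => g x * Hf h x ^ r) μ₀ with hB1_def
  set B2 := essSup (fun x => (a x)⁻¹ * g x * Kf β a h x ^ r) μ₀ with hB2_def
  refine essSup_le_of_ae_le _ ?_
  filter_upwards [hae, ae_restrict_mem measurableSet_Ioi] with x hax hx0
  obtain ⟨hax0, haxt⟩ := hax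
  have hx0' : (0:ℝ) < x := hx0
  have hpow0 : (a x)^β ≠ 0 := by rw [ne_eq, ENNReal.rpow_eq_zero_iff_of_pos hβ]; exact hax0.ne'
  have hpowt : (a x)^β ≠ ∞ := ENNReal.rpow_ne_top_of_nonneg hβ.le haxt.ne
  have hpow_cancel : ((a x)^β) ^ r = a x := by
    rw [← ENNReal.rpow_mul, hr_def, mul_one_div, div_self hβ.ne', ENNReal.rpow_one]
  have hpow_inv_cancel : (((a x)^β)⁻¹) ^ r = (a x)⁻¹ := by
    rw [← ENNReal.rpow_neg, ← ENNReal.rpow_mul, hr_def,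
      show -β * (1/β) = -1 by field_simp, ENNReal.rpow_neg_one]
  -- transferred a.e. facts on subintervals
  have haeB1 : ∀ᵐ t ∂μ₀, g t * Hf h t ^ r ≤ B1 := ENNReal.ae_le_essSup _
  have haeB2 : ∀ᵐ t ∂μ₀, (a t)⁻¹ * g t * Kf β a h t ^ r ≤ B2 := ENNReal.ae_le_essSup _
  -- (i)
  have hGB1 : Gf g x * Hf h x ^ r ≤ B1 := by
    rw [mul_comm (Gf g x)]
    simp only [Gf]
    rw [← ENNReal.essSup_const_mul]
    refine essSup_le_of_ae_le _ ?_
    have h1 : ∀ᵐ t ∂(volume.restrict (Ioo (0:ℝ) x)), g t * Hf h t ^ r ≤ B1 :=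
      ae_restrict_of_ae_restrict_of_subset (fun t ht => ht.1) haeB1
    filter_upwards [h1, ae_restrict_mem measurableSet_Ioo] with t ht1 ht2
    calc Hf h x ^ r * g t ≤ Hf h t ^ r * g t :=
          mul_le_mul_left (ENNReal.rpow_le_rpow (Hf_anti h ht2.2.le) hr.le) _
      _ = g t * Hf h t ^ r := mul_comm _ _
      _ ≤ B1 := ht1
  -- (iv)
  have hGtB2 : Gtf a g x * Kf β a h x ^ r ≤ B2 := by
    rw [mul_comm (Gtf a g x)]
    simp only [Gtf]
    rw [← ENNReal.essSup_const_mul]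
    refine essSup_le_of_ae_le _ ?_
    have h1 : ∀ᵐ t ∂(volume.restrict (Ioi x)), (a t)⁻¹ * g t * Kf β a h t ^ r ≤ B2 :=
      ae_restrict_of_ae_restrict_of_subset (Ioi_subset_Ioi hx0'.le) haeB2
    filter_upwards [h1, ae_restrict_mem measurableSet_Ioi] with t ht1 ht2
    calc Kf β a h x ^ r * ((a t)⁻¹ * g t)
        ≤ Kf β a h t ^ r * ((a t)⁻¹ * g t) :=
          mul_le_mul_left (ENNReal.rpow_le_rpow (Kf_mono β a h ht2.le) hr.le) _
      _ = (a t)⁻¹ * g t * Kf β a h t ^ r := by ring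
      _ ≤ B2 := ht1
  -- (ii)
  have hcross1 : Gf g x * ((a x)⁻¹ * Kf β a h x ^ r) ≤ D * (B1 + B2) := by
    rw [mul_comm (Gf g x)]
    simp only [Gf]
    rw [← ENNReal.essSup_const_mul]
    refine essSup_le_of_ae_le _ ?_
    have h1 : ∀ᵐ t ∂(volume.restrict (Ioo (0:ℝ) x)), g t * Hf h t ^ r ≤ B1 :=
      ae_restrict_of_ae_restrict_of_subset (fun t ht => ht.1) haeB1
    have h2 : ∀ᵐ t ∂(volume.restrict (Ioo (0:ℝ) x)), (a t)⁻¹ * g t * Kf β a h t ^ r ≤ B2 :=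
      ae_restrict_of_ae_restrict_of_subset (fun t ht => ht.1) haeB2
    have h3 : ∀ᵐ t ∂(volume.restrict (Ioo (0:ℝ) x)), 0 < a t ∧ a t < ∞ :=
      ae_restrict_of_ae_restrict_of_subset (fun t ht => ht.1) hae
    filter_upwards [h1, h2, h3, ae_restrict_mem measurableSet_Ioo] with t hB1t hB2t hat3 ht
    obtain ⟨hat0, hatt⟩ := hat3
    have ht0 : (0:ℝ) < t := ht.1
    -- K x ≤ K t + (a x)^β * H t
    have hIciIoi : ∫⁻ s in Ici t, h s = Hf h t := by
      rw [Hf, Measure.restrict_congr_set Ioi_ae_eq_Ici]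
    have hKsplit : Kf β a h x ≤ Kf β a h t + (a x)^β * Hf h t := by
      have hsub : Ioo (0:ℝ) x ⊆ Ioo 0 t ∪ Ico t x := by
        intro s hs
        rcases lt_or_ge s t with h'|h'
        · exact Or.inl ⟨hs.1, h'⟩
        · exact Or.inr ⟨h', hs.2⟩
      calc Kf β a h x ≤ ∫⁻ s in Ioo (0:ℝ) t ∪ Ico t x, a s ^ β * h s :=
            lintegral_mono_set hsub
        _ ≤ Kf β a h t + ∫⁻ s in Ico t x, a s ^ β * h s := by
            refine le_trans (lintegral_mono' (Measure.restrict_union_le _ _) le_rfl) ?_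
            rw [lintegral_add_measure]
            exact add_le_add (le_of_eq rfl) le_rfl
        _ ≤ Kf β a h t + (a x)^β * Hf h t := by
            refine add_le_add le_rfl ?_
            calc ∫⁻ s in Ico t x, a s ^ β * h s
                ≤ ∫⁻ s in Ico t x, (a x)^β * h s := by
                  refine setLIntegral_mono_on' measurableSet_Ico (fun s hs => ?_)
                  refine mul_le_mul_left (ENNReal.rpow_le_rpow ?_ hβ.le) _
                  exact hmono (lt_of_lt_of_le ht0 hs.1) hx0 hs.2.le
              _ = (a x)^β * ∫⁻ s in Ico t x, h s := lintegral_const_mul' _ _ hpowt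
              _ ≤ (a x)^β * Hf h t := by
                  refine mul_le_mul_right ?_ _
                  rw [← hIciIoi]
                  exact lintegral_mono_set Ico_subset_Ici_self
    have hKr : Kf β a h x ^ r ≤ D * (Kf β a h t ^ r + a x * Hf h t ^ r) := by
      refine le_trans (ENNReal.rpow_le_rpow hKsplit hr.le)
        (le_trans (add_rpow_le _ _ hr.le) ?_)
      rw [hD_def]
      gcongr
      rw [ENNReal.mul_rpow_of_nonneg _ _ hr.le, hpow_cancel]
    have hinv : (a x)⁻¹ ≤ (a t)⁻¹ := ENNReal.inv_le_inv' (hmono ht.1 hx0 ht.2.le)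
    have hinvc : (a x)⁻¹ * a x = 1 := ENNReal.inv_mul_cancel hax0.ne' haxt.ne
    calc ((a x)⁻¹ * Kf β a h x ^ r) * g t
        ≤ ((a x)⁻¹ * (D * (Kf β a h t ^ r + a x * Hf h t ^ r))) * g t := by
          refine mul_le_mul_left (mul_le_mul_right hKr _) _
      _ = D * (((a x)⁻¹ * Kf β a h t ^ r) * g t)
          + D * (((a x)⁻¹ * a x) * (Hf h t ^ r * g t)) := by ring
      _ = D * (((a x)⁻¹ * Kf β a h t ^ r) * g t) + D * (g t * Hf h t ^ r) := by
          rw [hinvc]; ring_nf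
      _ ≤ D * (((a t)⁻¹ * Kf β a h t ^ r) * g t) + D * (g t * Hf h t ^ r) := by
          gcongr
      _ = D * ((a t)⁻¹ * g t * Kf β a h t ^ r) + D * (g t * Hf h t ^ r) := by ring_nf
      _ ≤ D * B2 + D * B1 := add_le_add (mul_le_mul_right hB2t _) (mul_le_mul_right hB1t _)
      _ = D * (B1 + B2) := by ring
  -- (iii)
  have hcross2 : (a x * Gtf a g x) * Hf h x ^ r ≤ D * (B1 + B2) := by
    have e1 : (a x * Gtf a g x) * Hf h x ^ r = (a x * Hf h x ^ r) * Gtf a g x := by ring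
    rw [e1]
    simp only [Gtf]
    rw [← ENNReal.essSup_const_mul]
    refine essSup_le_of_ae_le _ ?_
    have h1 : ∀ᵐ t ∂(volume.restrict (Ioi x)), g t * Hf h t ^ r ≤ B1 :=
      ae_restrict_of_ae_restrict_of_subset (Ioi_subset_Ioi hx0'.le) haeB1
    have h2 : ∀ᵐ t ∂(volume.restrict (Ioi x)), (a t)⁻¹ * g t * Kf β a h t ^ r ≤ B2 :=
      ae_restrict_of_ae_restrict_of_subset (Ioi_subset_Ioi hx0'.le) haeB2
    have h3 : ∀ᵐ t ∂(volume.restrict (Ioi x)), 0 < a t ∧ a t < ∞ :=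
      ae_restrict_of_ae_restrict_of_subset (Ioi_subset_Ioi hx0'.le) hae
    filter_upwards [h1, h2, h3, ae_restrict_mem measurableSet_Ioi] with t hB1t hB2t hat3 ht
    obtain ⟨hat0, hatt⟩ := hat3
    have ht0 : (0:ℝ) < t := lt_trans hx0' ht
    have hIciIoi : ∫⁻ s in Ici t, h s = Hf h t := by
      rw [Hf, Measure.restrict_congr_set Ioi_ae_eq_Ici]
    have hHsplit : Hf h x ≤ Hf h t + ((a x)^β)⁻¹ * Kf β a h t := by
      have hsub : Ioi x ⊆ Ioo x t ∪ Ici t := by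
        intro s hs
        rcases lt_or_ge s t with h'|h'
        · exact Or.inl ⟨hs, h'⟩
        · exact Or.inr h'
      calc Hf h x ≤ ∫⁻ s in Ioo x t ∪ Ici t, h s := lintegral_mono_set hsub
        _ ≤ (∫⁻ s in Ioo x t, h s) + ∫⁻ s in Ici t, h s := by
            refine le_trans (lintegral_mono' (Measure.restrict_union_le _ _) le_rfl) ?_
            rw [lintegral_add_measure]
        _ ≤ ((a x)^β)⁻¹ * Kf β a h t + Hf h t := by
            refine add_le_add ?_ (le_of_eq hIciIoi)
            calc ∫⁻ s in Ioo x t, h s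
                ≤ ∫⁻ s in Ioo x t, ((a x)^β)⁻¹ * (a s ^ β * h s) := by
                  refine setLIntegral_mono_on' measurableSet_Ioo (fun s hs => ?_)
                  calc h s = (((a x)^β)⁻¹ * (a x)^β) * h s := by
                        rw [ENNReal.inv_mul_cancel hpow0 hpowt, one_mul]
                    _ ≤ (((a x)^β)⁻¹ * (a s)^β) * h s := by
                        refine mul_le_mul_left (mul_le_mul_right
                          (ENNReal.rpow_le_rpow (hmono hx0 (lt_trans hx0' hs.1) hs.1.le) hβ.le) _) _
                    _ = ((a x)^β)⁻¹ * ((a s)^β * h s) := by ring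
              _ = ((a x)^β)⁻¹ * ∫⁻ s in Ioo x t, a s ^ β * h s :=
                  lintegral_const_mul' _ _ (ENNReal.inv_ne_top.mpr hpow0)
              _ ≤ ((a x)^β)⁻¹ * Kf β a h t := by
                  refine mul_le_mul_right (lintegral_mono_set ?_) _
                  exact fun s hs => ⟨lt_trans hx0' hs.1, hs.2⟩
        _ = Hf h t + ((a x)^β)⁻¹ * Kf β a h t := add_comm _ _
    have hHr : Hf h x ^ r ≤ D * (Hf h t ^ r + (a x)⁻¹ * Kf β a h t ^ r) := by
      refine le_trans (ENNReal.rpow_le_rpow hHsplit hr.le)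
        (le_trans (add_rpow_le _ _ hr.le) ?_)
      rw [hD_def]
      gcongr
      rw [ENNReal.mul_rpow_of_nonneg _ _ hr.le, hpow_inv_cancel]
    have hax_le : a x * (a t)⁻¹ ≤ 1 := by
      calc a x * (a t)⁻¹ ≤ a t * (a t)⁻¹ :=
            mul_le_mul_left (hmono hx0 ht0 ht.le) _
        _ = 1 := ENNReal.mul_inv_cancel hat0.ne' hatt.ne
    have haxc : a x * (a x)⁻¹ = 1 := ENNReal.mul_inv_cancel hax0.ne' haxt.ne
    calc (a x * Hf h x ^ r) * ((a t)⁻¹ * g t)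
        ≤ (a x * (D * (Hf h t ^ r + (a x)⁻¹ * Kf β a h t ^ r))) * ((a t)⁻¹ * g t) := by
          refine mul_le_mul_left (mul_le_mul_right hHr _) _
      _ = D * ((a x * (a t)⁻¹) * (g t * Hf h t ^ r))
          + D * ((a x * (a x)⁻¹) * (((a t)⁻¹ * g t) * Kf β a h t ^ r)) := by ring
      _ ≤ D * (1 * (g t * Hf h t ^ r))
          + D * (1 * (((a t)⁻¹ * g t) * Kf β a h t ^ r)) := by
          rw [haxc]
          gcongr
      _ = D * (g t * Hf h t ^ r) + D * ((a t)⁻¹ * g t * Kf β a h t ^ r) := by ring_nf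
      _ ≤ D * B1 + D * B2 := add_le_add (mul_le_mul_right hB1t _) (mul_le_mul_right hB2t _)
      _ = D * (B1 + B2) := by ring
  -- S upper bound
  have hS : Sf a g x ≤ Gf g x + a x * Gtf a g x := by
    refine essSup_le_of_ae_le _ ?_
    have hsing : μ₀ {x} = 0 := by
      rw [Measure.restrict_apply (measurableSet_singleton x)]
      exact measure_mono_null inter_subset_left (measure_singleton x)
    have hxne : ∀ᵐ t ∂μ₀, t ≠ x := by
      rw [ae_iff]
      convert hsing using 2
      ext t
      simp
    have haeGx : ∀ᵐ t ∂μ₀, t ∈ Ioo (0:ℝ) x → g t ≤ Gf g x :=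
      ae_restrict_to_Ioi measurableSet_Ioo (fun s hs => hs.1) (ENNReal.ae_le_essSup g)
    have haeGtx : ∀ᵐ t ∂μ₀, t ∈ Ioi x → (a t)⁻¹ * g t ≤ Gtf a g x :=
      ae_restrict_to_Ioi measurableSet_Ioi (Ioi_subset_Ioi hx0'.le)
        (ENNReal.ae_le_essSup (fun t => (a t)⁻¹ * g t))
    filter_upwards [hxne, ae_restrict_mem measurableSet_Ioi, haeGx, haeGtx]
      with t htne ht0 hG hGt
    rcases lt_or_gt_of_ne htne with hlt | hgt
    · calc a x/(a x + a t) * g t ≤ 1 * g t := mul_le_mul_left div_add_le_one _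
        _ = g t := one_mul _
        _ ≤ Gf g x := hG ⟨ht0, hlt⟩
        _ ≤ Gf g x + a x * Gtf a g x := le_self_add
    · calc a x/(a x + a t) * g t ≤ (a x / a t) * g t := mul_le_mul_left div_add_le_div _
        _ = a x * ((a t)⁻¹ * g t) := by rw [div_eq_mul_inv]; ring
        _ ≤ a x * Gtf a g x := mul_le_mul_right (hGt hgt) _
        _ ≤ Gf g x + a x * Gtf a g x := le_add_self
  -- T upper bound
  have hTup : Tf β a h x ≤ Hf h x + ((a x)^β)⁻¹ * Kf β a h x := by
    have hIciIoi : ∫⁻ s in Ici x, h s = Hf h x := by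
      rw [Hf, Measure.restrict_congr_set Ioi_ae_eq_Ici]
    have hsub : Ioi (0:ℝ) ⊆ Ioo 0 x ∪ Ici x := by
      intro s hs
      rcases lt_or_ge s x with h'|h'
      · exact Or.inl ⟨hs, h'⟩
      · exact Or.inr h'
    calc Tf β a h x ≤ ∫⁻ t in Ioo (0:ℝ) x ∪ Ici x, (a t/(a t + a x))^β * h t :=
          lintegral_mono_set hsub
      _ ≤ (∫⁻ t in Ioo (0:ℝ) x, (a t/(a t + a x))^β * h t)
          + ∫⁻ t in Ici x, (a t/(a t + a x))^β * h t := by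
          refine le_trans (lintegral_mono' (Measure.restrict_union_le _ _) le_rfl) ?_
          rw [lintegral_add_measure]
      _ ≤ ((a x)^β)⁻¹ * Kf β a h x + Hf h x := by
          refine add_le_add ?_ ?_
          · calc ∫⁻ t in Ioo (0:ℝ) x, (a t/(a t + a x))^β * h t
                ≤ ∫⁻ t in Ioo (0:ℝ) x, ((a x)^β)⁻¹ * (a t ^ β * h t) := by
                  refine setLIntegral_mono_on' measurableSet_Ioo (fun t ht => ?_)
                  calc (a t/(a t + a x))^β * h t ≤ (a t / a x)^β * h t :=
                        mul_le_mul_left (ENNReal.rpow_le_rpow div_add_le_div hβ.le) _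
                    _ = ((a x)^β)⁻¹ * (a t ^ β * h t) := by
                        rw [ENNReal.div_rpow_of_nonneg _ _ hβ.le, div_eq_mul_inv]; ring
              _ = ((a x)^β)⁻¹ * Kf β a h x :=
                  lintegral_const_mul' _ _ (ENNReal.inv_ne_top.mpr hpow0)
          · calc ∫⁻ t in Ici x, (a t/(a t + a x))^β * h t ≤ ∫⁻ t in Ici x, h t := by
                  refine setLIntegral_mono_on' measurableSet_Ici (fun t ht => ?_)
                  calc (a t/(a t + a x))^β * h t ≤ 1^β * h t :=
                        mul_le_mul_left (ENNReal.rpow_le_rpow div_add_le_one hβ.le) _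
                    _ = h t := by rw [ENNReal.one_rpow, one_mul]
              _ = Hf h x := hIciIoi
      _ = Hf h x + ((a x)^β)⁻¹ * Kf β a h x := add_comm _ _
  have hTr : Tf β a h x ^ r ≤ D * (Hf h x ^ r + (a x)⁻¹ * Kf β a h x ^ r) := by
    refine le_trans (ENNReal.rpow_le_rpow hTup hr.le)
      (le_trans (add_rpow_le _ _ hr.le) ?_)
    rw [hD_def]
    gcongr
    rw [ENNReal.mul_rpow_of_nonneg _ _ hr.le, hpow_inv_cancel]
  -- combine everything
  have hlast : (a x * Gtf a g x) * ((a x)⁻¹ * Kf β a h x ^ r) ≤ B2 := by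
    have e : (a x * Gtf a g x) * ((a x)⁻¹ * Kf β a h x ^ r)
        = (a x * (a x)⁻¹) * (Gtf a g x * Kf β a h x ^ r) := by ring
    rw [e, ENNReal.mul_inv_cancel hax0.ne' haxt.ne, one_mul]
    exact hGtB2
  calc Sf a g x * Tf β a h x ^ r
      ≤ (Gf g x + a x * Gtf a g x) * (D * (Hf h x ^ r + (a x)⁻¹ * Kf β a h x ^ r)) :=
        mul_le_mul' hS hTr
    _ = D * (Gf g x * Hf h x ^ r) + D * (Gf g x * ((a x)⁻¹ * Kf β a h x ^ r))
        + D * ((a x * Gtf a g x) * Hf h x ^ r)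
        + D * ((a x * Gtf a g x) * ((a x)⁻¹ * Kf β a h x ^ r)) := by ring
    _ ≤ D * B1 + D * (D * (B1 + B2)) + D * (D * (B1 + B2)) + D * B2 :=
        add_le_add (add_le_add (add_le_add (mul_le_mul_right hGB1 _)
          (mul_le_mul_right hcross1 _)) (mul_le_mul_right hcross2 _)) (mul_le_mul_right hlast _)
    _ ≤ D * (B1 + B2) + D * (D * (B1 + B2)) + D * (D * (B1 + B2)) + D * (B1 + B2) :=
        add_le_add (add_le_add (add_le_add (mul_le_mul_right le_self_add _) le_rfl) le_rfl)
          (mul_le_mul_right le_add_self _)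
    _ = (2 * D + 2 * D * D) * (B1 + B2) := by ring


lemma lower_total {β : ℝ} (hβ : 0 < β) {a g h : ℝ → ℝ≥0∞}
    (ha : Measurable a) (hh : Measurable h)
    (hmono : MonotoneOn a (Ioi 0)) (hae : ∀ᵐ x ∂μ₀, 0 < a x ∧ a x < ∞) :
    essSup (fun x => g x * Hf h x ^ (1/β)) μ₀
      + essSup (fun x => (a x)⁻¹ * g x * Kf β a h x ^ (1/β)) μ₀
      ≤ 8 * essSup (fun x => Sf a g x * Tf β a h x ^ (1/β)) μ₀ := by
  set A := essSup (fun x => Sf a g x * Tf β a h x ^ (1/β)) μ₀ with hA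
  have hM1 : essSup (fun x => Gf g x * Hf h x ^ (1/β)) μ₀ ≤ 4 * A := by
    have h1 : essSup (fun x => 4⁻¹ * (Gf g x * Hf h x ^ (1/β))) μ₀ ≤ A :=
      essSup_mono_ae (L1 hβ hmono hae)
    rw [ENNReal.essSup_const_mul] at h1
    calc essSup (fun x => Gf g x * Hf h x ^ (1/β)) μ₀
        = 4 * (4⁻¹ * essSup (fun x => Gf g x * Hf h x ^ (1/β)) μ₀) := by
          rw [← mul_assoc, ENNReal.mul_inv_cancel (by norm_num) (by norm_num), one_mul]
      _ ≤ 4 * A := mul_le_mul_right h1 _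
  have hM2 : essSup (fun x => Gtf a g x * Kf β a h x ^ (1/β)) μ₀ ≤ 4 * A := by
    have h1 : essSup (fun x => 4⁻¹ * (Gtf a g x * Kf β a h x ^ (1/β))) μ₀ ≤ A :=
      essSup_mono_ae (L2 hβ hmono hae)
    rw [ENNReal.essSup_const_mul] at h1
    calc essSup (fun x => Gtf a g x * Kf β a h x ^ (1/β)) μ₀
        = 4 * (4⁻¹ * essSup (fun x => Gtf a g x * Kf β a h x ^ (1/β)) μ₀) := by
          rw [← mul_assoc, ENNReal.mul_inv_cancel (by norm_num) (by norm_num), one_mul]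
      _ ≤ 4 * A := mul_le_mul_right h1 _
  calc essSup (fun x => g x * Hf h x ^ (1/β)) μ₀
        + essSup (fun x => (a x)⁻¹ * g x * Kf β a h x ^ (1/β)) μ₀
      ≤ essSup (fun x => Gf g x * Hf h x ^ (1/β)) μ₀
        + essSup (fun x => Gtf a g x * Kf β a h x ^ (1/β)) μ₀ :=
        add_le_add (P1 hβ hh) (P2 hβ ha hh)
    _ ≤ 4 * A + 4 * A := add_le_add hM1 hM2
    _ = 8 * A := by ring

end GluingAux

open GluingAux in
/-- Gluing lemma (Lemma 2.2): for `β > 0`, a nondecreasing weight `a` on `(0,∞)` and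
nonnegative measurable `g, h`, with `𝒜(x,t) = a x / (a x + a t)`,
`esssup_x (esssup_t 𝒜(x,t) g t) (∫_0^∞ 𝒜(t,x)^β h t dt)^{1/β}
  ≈ esssup_x g x (∫_x^∞ h)^{1/β} + esssup_x (a x)⁻¹ g x (∫_0^x a^β h)^{1/β}`,
with equivalence constants depending only on `β`. -/
theorem gluing_esssup_integral (β : ℝ) (hβ : 0 < β) :
    ∃ c C : ℝ≥0∞, 0 < c ∧ c < ∞ ∧ 0 < C ∧ C < ∞ ∧
      ∀ a g h : ℝ → ℝ≥0∞, Measurable a → Measurable g → Measurable h →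
        MonotoneOn a (Ioi 0) →
        (∀ᵐ x ∂(volume.restrict (Ioi (0:ℝ))), 0 < a x ∧ a x < ∞) →
        let A := essSup (fun x =>
            (essSup (fun t => a x / (a x + a t) * g t) (volume.restrict (Ioi (0:ℝ)))) *
            (∫⁻ t in Ioi (0:ℝ), (a t / (a t + a x)) ^ β * h t) ^ (1 / β))
          (volume.restrict (Ioi (0:ℝ)))
        let B := essSup (fun x => g x * (∫⁻ t in Ioi x, h t) ^ (1 / β))
            (volume.restrict (Ioi (0:ℝ)))
          + essSup (fun x => (a x)⁻¹ * g x *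
              (∫⁻ t in Ioo (0:ℝ) x, a t ^ β * h t) ^ (1 / β))
            (volume.restrict (Ioi (0:ℝ)))
        c * B ≤ A ∧ A ≤ C * B := by
  have hβ' : (0:ℝ) < 1/β := by positivity
  set D := (2:ℝ≥0∞)^(1/β) with hD
  have hD0 : D ≠ 0 := by
    rw [hD]
    exact (ENNReal.rpow_pos (by norm_num) (by norm_num)).ne'
  have hDt : D ≠ ∞ := by
    rw [hD]
    exact ENNReal.rpow_ne_top_of_nonneg hβ'.le (by norm_num)
  refine ⟨8⁻¹, 2*D + 2*D*D, ?_, ?_, ?_, ?_, ?_⟩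
  · exact ENNReal.inv_pos.mpr (by norm_num)
  · exact ENNReal.inv_lt_top.mpr (by norm_num)
  · exact lt_of_lt_of_le (ENNReal.mul_pos (by norm_num) hD0) le_self_add
  · exact lt_top_iff_ne_top.mpr (ENNReal.add_ne_top.mpr
      ⟨ENNReal.mul_ne_top (by norm_num) hDt,
        ENNReal.mul_ne_top (ENNReal.mul_ne_top (by norm_num) hDt) hDt⟩)
  intro a g h ha hg hh hmono hae
  intro A B
  have hA : A = essSup (fun x => Sf a g x * Tf β a h x ^ (1/β))
      (volume.restrict (Ioi (0:ℝ))) := rfl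
  have hB : B = essSup (fun x => g x * Hf h x ^ (1/β)) (volume.restrict (Ioi (0:ℝ)))
      + essSup (fun x => (a x)⁻¹ * g x * Kf β a h x ^ (1/β))
        (volume.restrict (Ioi (0:ℝ))) := rfl
  rw [hA, hB]
  constructor
  · have hlt := lower_total (g := g) hβ ha hh hmono hae
    calc (8:ℝ≥0∞)⁻¹ * (essSup (fun x => g x * Hf h x ^ (1/β)) (volume.restrict (Ioi (0:ℝ)))
          + essSup (fun x => (a x)⁻¹ * g x * Kf β a h x ^ (1/β))
            (volume.restrict (Ioi (0:ℝ))))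
        ≤ 8⁻¹ * (8 * essSup (fun x => Sf a g x * Tf β a h x ^ (1/β))
            (volume.restrict (Ioi (0:ℝ)))) := mul_le_mul_right hlt _
      _ = essSup (fun x => Sf a g x * Tf β a h x ^ (1/β)) (volume.restrict (Ioi (0:ℝ))) := by
          rw [← mul_assoc, ENNReal.inv_mul_cancel (by norm_num) (by norm_num), one_mul]
  · exact upper hβ hmono hae
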